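/- In the Heisenberg group case (ℓ = 1, b = 1), the volume of the unit sub-Riemannian ball with respect to Lebesgue measure, computed via the formula V = ∫ over the optimal domain of the Jacobian of the exponential map, equals (1/12)(1 + 2π Si(2π)), where Si(x) = ∫_0^x (sin t)/t dt. -/

import Mathlib

open Real MeasureTheory Set

/-- The sine integral `Si(x) = ∫₀ˣ sin t / t dt`. -/
noncomputable def Si (x : ℝ) : ℝ := ∫ t in Ioc (0:ℝ) x, sin t / t

/-- The sub-Riemannian exponential map (at time 1) of the Heisenberg group, in the
coordinates `(r, θ, w)` on the cotangent fiber. -/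
noncomputable def heisExp (p : ℝ × ℝ × ℝ) : ℝ × ℝ × ℝ :=
  (p.1 / p.2.2 * (cos (p.2.2 + p.2.1) - cos p.2.1),
   p.1 / p.2.2 * (sin (p.2.2 + p.2.1) - sin p.2.1),
   1 / (2 * p.2.2 ^ 2) * (p.2.2 * p.1 ^ 2 - p.1 ^ 2 * sin p.2.2))

set_option maxHeartbeats 2000000 in
noncomputable def e3 : (ℝ × ℝ × ℝ) ≃ₗ[ℝ] (Fin 3 → ℝ) where
  toFun p := ![p.1, p.2.1, p.2.2]
  invFun v := (v 0, v 1, v 2)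
  map_add' p q := by funext i; fin_cases i <;> simp
  map_smul' c p := by funext i; fin_cases i <;> simp
  left_inv p := rfl
  right_inv v := by funext i; fin_cases i <;> rfl

lemma e3_apply (p : ℝ × ℝ × ℝ) : e3 p = ![p.1, p.2.1, p.2.2] := rfl
lemma e3_symm_apply (v : Fin 3 → ℝ) : e3.symm v = (v 0, v 1, v 2) := rfl

noncomputable def B3 : Module.Basis (Fin 3) ℝ (ℝ × ℝ × ℝ) := Module.Basis.ofEquivFun e3

theorem heis_det (p : ℝ × ℝ × ℝ) (hw : p.2.2 ≠ 0) :
    (fderiv ℝ heisExp p).det =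
      p.1 ^ 3 * (2 - 2 * cos p.2.2 - p.2.2 * sin p.2.2) / p.2.2 ^ 4 := by
  have hR : HasFDerivAt (fun q : ℝ × ℝ × ℝ => q.1)
      (ContinuousLinearMap.fst ℝ ℝ (ℝ × ℝ)) p := hasFDerivAt_fst
  have hT : HasFDerivAt (fun q : ℝ × ℝ × ℝ => q.2.1)
      ((ContinuousLinearMap.fst ℝ ℝ ℝ).comp (ContinuousLinearMap.snd ℝ ℝ (ℝ × ℝ))) p :=
    hasFDerivAt_fst.comp p hasFDerivAt_snd
  have hW : HasFDerivAt (fun q : ℝ × ℝ × ℝ => q.2.2)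
      ((ContinuousLinearMap.snd ℝ ℝ ℝ).comp (ContinuousLinearMap.snd ℝ ℝ (ℝ × ℝ))) p :=
    hasFDerivAt_snd.comp p hasFDerivAt_snd
  have hWinv := (hasDerivAt_inv hw).comp_hasFDerivAt p hW
  have h1 := ((hR.mul hWinv).mul (((hW.add hT).cos).sub hT.cos))
  have h2 := ((hR.mul hWinv).mul (((hW.add hT).sin).sub hT.sin))
  have hden : (2 * (p.2.2 * p.2.2)) ≠ 0 := by simpa using mul_ne_zero hw hw
  have h3' := ((hasFDerivAt_const (2:ℝ) p).mul (hW.mul hW))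
  have hDenInv := (hasDerivAt_inv hden).comp_hasFDerivAt p h3'
  have h3 := hDenInv.mul ((hW.mul (hR.mul hR)).sub ((hR.mul hR).mul hW.sin))
  have h := (h1.prodMk (h2.prodMk h3))
  have he : heisExp = (fun q : ℝ × ℝ × ℝ =>
      (q.1 * (q.2.2)⁻¹ * (cos (q.2.2 + q.2.1) - cos q.2.1),
       q.1 * (q.2.2)⁻¹ * (sin (q.2.2 + q.2.1) - sin q.2.1),
       (2 * (q.2.2 * q.2.2))⁻¹ * (q.2.2 * (q.1 * q.1) - q.1 * q.1 * sin q.2.2))) := by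
    funext q
    simp only [heisExp, div_eq_mul_inv, one_mul]
    ring_nf
  simp only [Function.comp_def, Pi.mul_apply, Pi.add_apply, Pi.sub_apply] at h
  rw [← he] at h
  rw [h.fderiv]
  rw [ContinuousLinearMap.det, ← LinearMap.det_toMatrix B3, Matrix.det_fin_three]
  simp only [LinearMap.toMatrix_apply, B3, Module.Basis.ofEquivFun_repr_apply, Module.Basis.coe_ofEquivFun,
    ContinuousLinearMap.coe_coe, ContinuousLinearMap.prod_apply, ContinuousLinearMap.add_apply,
    ContinuousLinearMap.coe_smul', Pi.smul_apply, ContinuousLinearMap.coe_comp',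
    Function.comp_apply, ContinuousLinearMap.coe_fst', ContinuousLinearMap.coe_snd',
    ContinuousLinearMap.coe_sub', Pi.sub_apply, smul_eq_mul, e3_apply, e3_symm_apply]
  simp only [Matrix.cons_val_zero, Matrix.cons_val_one, Matrix.head_cons, Matrix.cons_val_two,
    Matrix.tail_cons, Pi.single_eq_same, ne_eq, Pi.single_eq_of_ne, ContinuousLinearMap.zero_apply,
    Pi.zero_apply]
  norm_num [Pi.single_apply, Fin.ext_iff]
  simp only [Real.sin_add, Real.cos_add]
  have hp1 := sin_sq_add_cos_sq p.2.1
  have hp2 := sin_sq_add_cos_sq p.2.2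
  field_simp
  linear_combination (p.1^3*p.2.2*(-cos p.2.2*sin p.2.2^2 - 3*cos p.2.2 + 3*cos p.2.2^2
      - cos p.2.2^3 + 3*sin p.2.2^2 + 1) - 2*sin p.2.2*p.1^3*p.2.2^2) * hp1
    + (3*p.1^3*p.2.2 - cos p.2.2*p.1^3*p.2.2) * hp2

-- analysis

lemma sinc_lower {u : ℝ} (h0 : 0 ≤ u) (hπ : u ≤ π) : 0 ≤ sin u - u * cos u := by
  have mono : MonotoneOn (fun u : ℝ => sin u - u * cos u) (Icc 0 π) := by
    apply monotoneOn_of_deriv_nonneg (convex_Icc 0 π)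
    · fun_prop
    · intro x hx
      exact ((Real.differentiable_sin x).sub
        ((differentiable_id x).mul (Real.differentiable_cos x))).differentiableWithinAt
    · intro x hx
      rw [interior_Icc] at hx
      have hd : HasDerivAt (fun u : ℝ => sin u - u * cos u) (x * sin x) x := by
        have := (Real.hasDerivAt_sin x).sub ((hasDerivAt_id x).mul (Real.hasDerivAt_cos x))
        refine this.congr_deriv ?_; simp [id]; try ring
      rw [hd.deriv]
      exact mul_nonneg hx.1.le (sin_nonneg_of_nonneg_of_le_pi hx.1.le hx.2.le)
  have := mono (left_mem_Icc.2 pi_nonneg) ⟨h0, hπ⟩ h0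
  simpa using this

lemma sinc_upper {u : ℝ} (h0 : 0 ≤ u) : sin u - u * cos u ≤ u ^ 3 / 3 := by
  have mono : MonotoneOn (fun u : ℝ => u ^ 3 / 3 - (sin u - u * cos u)) (Ici 0) := by
    apply monotoneOn_of_deriv_nonneg (convex_Ici 0)
    · fun_prop
    · intro x hx
      apply DifferentiableAt.differentiableWithinAt
      fun_prop
    · intro x hx
      rw [interior_Ici] at hx
      have hd : HasDerivAt (fun u : ℝ => u ^ 3 / 3 - (sin u - u * cos u))
          (x ^ 2 - x * sin x) x := by
        have := (((hasDerivAt_pow 3 x).div_const 3).sub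
          ((Real.hasDerivAt_sin x).sub ((hasDerivAt_id x).mul (Real.hasDerivAt_cos x))))
        refine this.congr_deriv ?_; simp [id]; try ring
      rw [hd.deriv]
      have : sin x ≤ x := Real.sin_le hx.le
      nlinarith [le_of_lt (show (0:ℝ) < x from hx)]
  have := mono (mem_Ici.2 le_rfl) h0 h0
  simpa using this

-- N w = 2 - 2 cos w - w sin w
lemma N_factor (w : ℝ) : 2 - 2 * cos w - w * sin w
    = 4 * sin (w/2) * (sin (w/2) - (w/2) * cos (w/2)) := by
  have h1 : cos w = 1 - 2 * sin (w/2) ^ 2 := by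
    have := Real.cos_sq' (w/2)
    have h2 := Real.cos_two_mul (w/2)
    rw [show 2 * (w/2) = w by ring] at h2
    nlinarith [Real.sin_sq_add_cos_sq (w/2)]
  have h2 : sin w = 2 * sin (w/2) * cos (w/2) := by
    have := Real.sin_two_mul (w/2)
    rwa [show 2 * (w/2) = w by ring] at this
  rw [h1, h2]; ring

lemma N_nonneg {w : ℝ} (h0 : 0 ≤ w) (h2 : w ≤ 2 * π) : 0 ≤ 2 - 2 * cos w - w * sin w := by
  rw [N_factor]
  have hu0 : 0 ≤ w / 2 := by linarith
  have huπ : w / 2 ≤ π := by linarith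
  have := sinc_lower hu0 huπ
  have := sin_nonneg_of_nonneg_of_le_pi hu0 huπ
  nlinarith

lemma N_le {w : ℝ} (h0 : 0 ≤ w) (h2 : w ≤ 2 * π) :
    2 - 2 * cos w - w * sin w ≤ w ^ 4 / 12 := by
  rw [N_factor]
  have hu0 : 0 ≤ w / 2 := by linarith
  have huπ : w / 2 ≤ π := by linarith
  have h1 := sinc_lower hu0 huπ
  have h2 := sinc_upper hu0
  have h3 : sin (w/2) ≤ w/2 := Real.sin_le hu0
  have h4 := sin_nonneg_of_nonneg_of_le_pi hu0 huπ
  nlinarith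

noncomputable def Hfun (w : ℝ) : ℝ :=
  (2 * cos w - 2) / (3 * w ^ 3) + sin w / (6 * w ^ 2) + cos w / (6 * w) + Si w / 6

lemma sinc_meas : Measurable (fun t : ℝ => sin t / t) := by fun_prop

lemma abs_sinc_le (t : ℝ) : ‖sin t / t‖ ≤ 1 := by
  rcases eq_or_ne t 0 with h | h
  · simp [h]
  · rw [Real.norm_eq_abs, abs_div]
    rw [div_le_one (abs_pos.2 h)]
    exact Real.abs_sin_le_abs

lemma sinc_intble (a b : ℝ) : IntervalIntegrable (fun t : ℝ => sin t / t) volume a b := by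
  rw [intervalIntegrable_iff]
  apply Measure.integrableOn_of_bounded (M := 1)
  · exact ne_of_lt (by rw [Set.uIoc]; exact measure_Ioc_lt_top)
  · exact sinc_meas.aestronglyMeasurable
  · exact Filter.Eventually.of_forall abs_sinc_le

lemma Si_eq {x : ℝ} (hx : 0 ≤ x) : Si x = ∫ t in (0:ℝ)..x, sin t / t := by
  rw [intervalIntegral.integral_of_le hx]
  rfl

lemma Si_hasDerivAt {x : ℝ} (hx : 0 < x) : HasDerivAt Si (sin x / x) x := by
  have h := intervalIntegral.integral_hasDerivAt_right (sinc_intble 0 x)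
    (sinc_meas.aestronglyMeasurable.stronglyMeasurableAtFilter)
    (ContinuousAt.div (Real.continuous_sin.continuousAt) continuousAt_id hx.ne')
  apply h.congr_of_eventuallyEq
  filter_upwards [eventually_gt_nhds hx] with y hy
  exact Si_eq hy.le

lemma Si_abs_le {x : ℝ} (hx : 0 ≤ x) : |Si x| ≤ x := by
  have h : ‖∫ t in Ioc (0:ℝ) x, sin t / t‖ ≤ 1 * (volume (Ioc (0:ℝ) x)).toReal := by
    apply norm_setIntegral_le_of_norm_le_const
    · rw [Real.volume_Ioc]; exact ENNReal.ofReal_lt_top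
    · exact fun t _ => abs_sinc_le t
  simpa [Si, Real.volume_Ioc, ENNReal.toReal_ofReal hx] using h

lemma Hfun_zero : Hfun 0 = 0 := by
  simp [Hfun, Si]

lemma Hfun_hasDerivAt {x : ℝ} (hx : 0 < x) :
    HasDerivAt Hfun ((2 - 2 * cos x - x * sin x) / x ^ 4) x := by
  have hx3 : (3 * x ^ 3) ≠ 0 := by positivity
  have hx2 : (6 * x ^ 2) ≠ 0 := by positivity
  have hx1 : (6 * x) ≠ 0 := by positivity
  have n1 : HasDerivAt (fun w : ℝ => 2 * cos w - 2) (2 * (-sin x)) x :=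
    ((Real.hasDerivAt_cos x).const_mul 2).sub_const 2
  have m1 : HasDerivAt (fun w : ℝ => 3 * w ^ 3) (3 * (3 * x ^ 2)) x := by
    have := (hasDerivAt_pow 3 x).const_mul 3
    exact this.congr_deriv (by norm_num)
  have m2 : HasDerivAt (fun w : ℝ => 6 * w ^ 2) (6 * (2 * x)) x := by
    have := (hasDerivAt_pow 2 x).const_mul 6
    exact this.congr_deriv (by norm_num)
  have m3 : HasDerivAt (fun w : ℝ => 6 * w) (6 * 1) x := by
    have := (hasDerivAt_id x).const_mul 6
    exact this.congr_deriv (by norm_num)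
  have d1 := n1.div m1 hx3
  have d2 := (Real.hasDerivAt_sin x).div m2 hx2
  have d3 := (Real.hasDerivAt_cos x).div m3 hx1
  have d4 := (Si_hasDerivAt hx).div_const 6
  have := ((d1.add d2).add d3).add d4
  refine this.congr_deriv ?_
  field_simp
  ring

lemma Hfun_bound {w : ℝ} (h0 : 0 < w) (h1 : w ≤ 1) : |Hfun w| ≤ w := by
  have hw3 : (0:ℝ) < w ^ 3 := by positivity
  have hG : Hfun w = (4 * cos w - 4 + w * sin w + w ^ 2 * cos w + w ^ 3 * Si w) / (6 * w ^ 3) := by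
    rw [Hfun]
    field_simp
    ring
  set δc := cos w - (1 - w ^ 2 / 2) with hδc
  set δs := sin w - (w - w ^ 3 / 6) with hδs
  have hbc : |δc| ≤ |w| ^ 4 * (5 / 96) := Real.cos_bound (by rw [abs_of_pos h0]; exact h1)
  have hbs : |δs| ≤ |w| ^ 4 * (5 / 96) := by
    have hb := Real.sin_bound (x := w) (by rw [abs_of_pos h0]; exact h1)
    have ha : |w| ≤ 1 := by rw [abs_of_pos h0]; exact h1
    have hm := mul_le_mul_of_nonneg_left ha (pow_nonneg (abs_nonneg w) 4)
    have hp := pow_nonneg (abs_nonneg w) 4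
    have e : |w| ^ 5 = |w| ^ 4 * |w| := pow_succ _ _
    rw [hδs]
    linarith
  rw [abs_of_pos h0] at hbc hbs
  have hSi : |Si w| ≤ w := Si_abs_le h0.le
  have hGval : 4 * cos w - 4 + w * sin w + w ^ 2 * cos w + w ^ 3 * Si w
      = -(2/3) * w ^ 4 + 4 * δc + w * δs + w ^ 2 * δc + w ^ 3 * Si w := by
    rw [hδc, hδs]; ring
  have habs : |4 * cos w - 4 + w * sin w + w ^ 2 * cos w + w ^ 3 * Si w| ≤ 6 * w ^ 4 := by
    rw [hGval]
    rw [abs_le] at hbc hbs hSi ⊢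
    have k1 : w * w ^ 4 ≤ w ^ 4 := by nlinarith [pow_nonneg h0.le 4]
    have k2 : w ^ 2 * w ^ 4 ≤ w ^ 4 := by nlinarith [pow_nonneg h0.le 4, sq_nonneg w]
    have k3 : w ^ 3 * w ≤ w ^ 4 := by nlinarith [pow_nonneg h0.le 4]
    have e2 := mul_le_mul_of_nonneg_left hbs.2 h0.le
    have e2' := mul_le_mul_of_nonneg_left hbs.1 h0.le
    have e3 := mul_le_mul_of_nonneg_left hbc.2 (sq_nonneg w)
    have e3' := mul_le_mul_of_nonneg_left hbc.1 (sq_nonneg w)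
    have e4 := mul_le_mul_of_nonneg_left hSi.2 (pow_nonneg h0.le 3)
    have e4' := mul_le_mul_of_nonneg_left hSi.1 (pow_nonneg h0.le 3)
    have hw4 : (0:ℝ) ≤ w ^ 4 := pow_nonneg h0.le 4
    constructor <;> nlinarith
  rw [hG, abs_div]
  rw [abs_of_pos (by positivity : (0:ℝ) < 6 * w ^ 3)]
  rw [div_le_iff₀ (by positivity)]
  calc |4 * cos w - 4 + w * sin w + w ^ 2 * cos w + w ^ 3 * Si w| ≤ 6 * w ^ 4 := habs
    _ = w * (6 * w ^ 3) := by ring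

lemma Hfun_contOn : ContinuousOn Hfun (Icc 0 (2 * π)) := by
  intro x hx
  rcases eq_or_lt_of_le hx.1 with h | h
  · -- x = 0
    subst h
    rw [ContinuousWithinAt, Hfun_zero]
    apply squeeze_zero_norm' (a := fun t => t)
    · filter_upwards [Filter.inter_mem (eventually_nhdsWithin_of_eventually_nhds
        (eventually_abs_sub_lt 0 (by norm_num : (0:ℝ) < 1))) self_mem_nhdsWithin] with t ht
      rcases eq_or_lt_of_le ht.2.1 with h' | h'
      · simp [← h', Hfun_zero]
      · have : |t| < 1 := by simpa using ht.1
        calc ‖Hfun t‖ = |Hfun t| := rfl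
          _ ≤ t := Hfun_bound h' (by rw [abs_of_pos h'] at this; exact this.le)
    · exact Filter.tendsto_id.mono_left nhdsWithin_le_nhds
  · exact ((Hfun_hasDerivAt h).continuousAt).continuousWithinAt

lemma h_intble : IntervalIntegrable (fun w : ℝ => (2 - 2 * cos w - w * sin w) / w ^ 4)
    volume 0 (2 * π) := by
  rw [intervalIntegrable_iff]
  apply Measure.integrableOn_of_bounded (M := 1)
  · exact ne_of_lt (by rw [Set.uIoc]; exact measure_Ioc_lt_top)
  · exact Measurable.aestronglyMeasurable (by fun_prop)
  · rw [Set.uIoc_of_le (by positivity : (0:ℝ) ≤ 2 * π)]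
    rw [ae_restrict_iff' measurableSet_Ioc]
    apply Filter.Eventually.of_forall
    intro w hw
    have hN0 := N_nonneg hw.1.le hw.2
    have hN1 := N_le hw.1.le hw.2
    have hw4 : (0:ℝ) < w ^ 4 := pow_pos hw.1 4
    rw [Real.norm_eq_abs, abs_div, abs_of_nonneg hN0, abs_of_pos hw4, div_le_one hw4]
    nlinarith

lemma key_integral : ∫ w in (0:ℝ)..(2 * π), (2 - 2 * cos w - w * sin w) / w ^ 4
    = 1 / (12 * π) + Si (2 * π) / 6 := by
  have h2π : (0:ℝ) < 2 * π := by positivity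
  rw [intervalIntegral.integral_eq_sub_of_hasDeriv_right_of_le h2π.le Hfun_contOn
    (fun x hx => (Hfun_hasDerivAt hx.1).hasDerivWithinAt) h_intble]
  rw [Hfun_zero, Hfun]
  rw [Real.cos_two_pi, Real.sin_two_pi]
  have : π ≠ 0 := Real.pi_ne_zero
  field_simp
  ring


lemma N_nonneg' {w : ℝ} (h : |w| ≤ 2 * π) : 0 ≤ 2 - 2 * cos w - w * sin w := by
  rcases le_total 0 w with hw | hw
  · exact N_nonneg hw (by rwa [abs_of_nonneg hw] at h)
  · have := N_nonneg (neg_nonneg.2 hw) (by rwa [abs_of_nonpos hw] at h)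
    rw [Real.cos_neg, Real.sin_neg] at this
    nlinarith

lemma N_le' {w : ℝ} (h : |w| ≤ 2 * π) : 2 - 2 * cos w - w * sin w ≤ w ^ 4 / 12 := by
  rcases le_total 0 w with hw | hw
  · exact N_le hw (by rwa [abs_of_nonneg hw] at h)
  · have := N_le (neg_nonneg.2 hw) (by rwa [abs_of_nonpos hw] at h)
    rw [Real.cos_neg, Real.sin_neg] at this
    nlinarith

lemma habs {w : ℝ} (h : |w| ≤ 2 * π) : ‖(2 - 2 * cos w - w * sin w) / w ^ 4‖ ≤ 1 := by
  rcases eq_or_ne w 0 with h0 | h0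
  · simp [h0]
  · have hw4 : (0:ℝ) < w ^ 4 := by positivity
    have hN0 := N_nonneg' h
    have hN1 := N_le' h
    rw [Real.norm_eq_abs, abs_div, abs_of_nonneg hN0, abs_of_pos hw4, div_le_one hw4]
    nlinarith

lemma h_intble' (a b : ℝ) (ha : |a| ≤ 2 * π) (hb : |b| ≤ 2 * π) :
    IntervalIntegrable (fun w : ℝ => (2 - 2 * cos w - w * sin w) / w ^ 4) volume a b := by
  rw [intervalIntegrable_iff]
  apply Measure.integrableOn_of_bounded (M := 1)
  · exact ne_of_lt (by rw [Set.uIoc]; exact measure_Ioc_lt_top)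
  · exact Measurable.aestronglyMeasurable (by fun_prop)
  · rw [ae_restrict_iff' measurableSet_uIoc]
    apply Filter.Eventually.of_forall
    intro w hw
    apply habs
    rw [Set.uIoc] at hw
    rw [abs_le] at ha hb ⊢
    rcases le_total a b with hab | hab
    · simp [min_eq_left hab, max_eq_right hab] at hw
      constructor <;> nlinarith [hw.1, hw.2]
    · simp [min_eq_right hab, max_eq_left hab] at hw
      constructor <;> nlinarith [hw.1, hw.2]

lemma w_integral : ∫ w in Icc (-(2 * π)) (2 * π), (2 - 2 * cos w - w * sin w) / w ^ 4
    = 2 * (1 / (12 * π) + Si (2 * π) / 6) := by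
  have h2π : (0:ℝ) < 2 * π := by positivity
  have hle : -(2 * π) ≤ 2 * π := by linarith
  have habs2 : |(-(2 * π) : ℝ)| ≤ 2 * π := by rw [abs_neg, abs_of_pos h2π]
  have habs0 : |(0:ℝ)| ≤ 2 * π := by simp [h2π.le]
  have habs1 : |(2 * π : ℝ)| ≤ 2 * π := le_of_eq (abs_of_pos h2π)
  rw [integral_Icc_eq_integral_Ioc, ← intervalIntegral.integral_of_le hle]
  rw [← intervalIntegral.integral_add_adjacent_intervals (b := 0)
    (h_intble' _ _ habs2 habs0) (h_intble' _ _ habs0 habs1)]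
  have heven : ∫ w in (-(2*π):ℝ)..0, (2 - 2 * cos w - w * sin w) / w ^ 4
      = ∫ w in (0:ℝ)..(2*π), (2 - 2 * cos w - w * sin w) / w ^ 4 := by
    have := intervalIntegral.integral_comp_neg
      (a := (0:ℝ)) (b := 2*π) (fun w : ℝ => (2 - 2 * cos w - w * sin w) / w ^ 4)
    simp only [neg_zero] at this
    rw [← this]
    apply intervalIntegral.integral_congr
    intro x _
    simp [Real.cos_neg, Real.sin_neg]
    ring_nf
  rw [heven, key_integral]
  ring

lemma null_w0 : volume {p : ℝ × ℝ × ℝ | p.2.2 = 0} = 0 := by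
  have : {p : ℝ × ℝ × ℝ | p.2.2 = 0} = (univ : Set ℝ) ×ˢ ((univ : Set ℝ) ×ˢ ({0} : Set ℝ)) := by
    ext p
    simp only [Set.mem_prod, Set.mem_univ, true_and, Set.mem_singleton_iff, Set.mem_setOf_eq]
  rw [this, Measure.volume_eq_prod ℝ (ℝ × ℝ), Measure.prod_prod, Measure.volume_eq_prod ℝ ℝ, Measure.prod_prod]
  simp

/-- The Lebesgue volume of the unit sub-Riemannian ball of the Heisenberg group, computed
as the integral of the Jacobian of the exponential map over the optimal domain
`{0 ≤ r ≤ 1, 0 ≤ θ ≤ 2π, |w| ≤ 2π}`, equals `(1/12)(1 + 2π Si(2π))`. -/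
theorem heisenberg_ball_volume :
    ∫ p in (Icc (0:ℝ) 1 ×ˢ Icc (0:ℝ) (2 * π) ×ˢ Icc (-(2 * π)) (2 * π)),
        |(fderiv ℝ heisExp p).det| =
      1 / 12 * (1 + 2 * π * Si (2 * π)) := by
  have h2π : (0:ℝ) < 2 * π := by positivity
  have hs : MeasurableSet (Icc (0:ℝ) 1 ×ˢ Icc (0:ℝ) (2 * π) ×ˢ Icc (-(2 * π)) (2 * π)) :=
    measurableSet_Icc.prod (measurableSet_Icc.prod measurableSet_Icc)
  have hcongr : ∫ p in (Icc (0:ℝ) 1 ×ˢ Icc (0:ℝ) (2 * π) ×ˢ Icc (-(2 * π)) (2 * π)),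
        |(fderiv ℝ heisExp p).det|
      = ∫ p in (Icc (0:ℝ) 1 ×ˢ Icc (0:ℝ) (2 * π) ×ˢ Icc (-(2 * π)) (2 * π)),
        (fun r : ℝ => r ^ 3) p.1 *
          (fun q : ℝ × ℝ => (2 - 2 * cos q.2 - q.2 * sin q.2) / q.2 ^ 4) p.2 := by
    apply setIntegral_congr_ae hs
    have hae : ∀ᵐ p : ℝ × ℝ × ℝ, p.2.2 ≠ 0 := by
      rw [Filter.eventually_iff, mem_ae_iff]
      have : {p : ℝ × ℝ × ℝ | p.2.2 ≠ 0}ᶜ = {p : ℝ × ℝ × ℝ | p.2.2 = 0} := by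
        ext p; simp
      rw [this]; exact null_w0
    filter_upwards [hae] with p hp hmem
    rw [heis_det p hp]
    obtain ⟨hr, hθ, hw⟩ := hmem
    have hwabs : |p.2.2| ≤ 2 * π := abs_le.2 ⟨hw.1, hw.2⟩
    have hN0 := N_nonneg' hwabs
    have hw4 : (0:ℝ) < p.2.2 ^ 4 := by positivity
    rw [abs_of_nonneg]
    · rw [mul_div_assoc]
    · apply div_nonneg _ hw4.le
      exact mul_nonneg (pow_nonneg hr.1 3) hN0
  rw [hcongr, Measure.volume_eq_prod ℝ (ℝ × ℝ)]
  rw [setIntegral_prod_mul (μ := (volume : Measure ℝ)) (ν := (volume : Measure (ℝ × ℝ)))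
    (fun r : ℝ => r ^ 3) (fun q : ℝ × ℝ => (2 - 2 * cos q.2 - q.2 * sin q.2) / q.2 ^ 4)
    (Icc (0:ℝ) 1) (Icc (0:ℝ) (2 * π) ×ˢ Icc (-(2 * π)) (2 * π))]
  have hinner : ∫ q in (Icc (0:ℝ) (2 * π) ×ˢ Icc (-(2 * π)) (2 * π)),
        (2 - 2 * cos q.2 - q.2 * sin q.2) / q.2 ^ 4
      = (∫ θ in Icc (0:ℝ) (2 * π), (1:ℝ)) *
        ∫ w in Icc (-(2 * π)) (2 * π), (2 - 2 * cos w - w * sin w) / w ^ 4 := by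
    rw [Measure.volume_eq_prod ℝ ℝ]
    rw [← setIntegral_prod_mul (μ := (volume : Measure ℝ)) (ν := (volume : Measure ℝ))
      (fun _ : ℝ => (1:ℝ)) (fun w : ℝ => (2 - 2 * cos w - w * sin w) / w ^ 4)
      (Icc (0:ℝ) (2 * π)) (Icc (-(2 * π)) (2 * π))]
    apply setIntegral_congr_ae (measurableSet_Icc.prod measurableSet_Icc)
    apply Filter.Eventually.of_forall
    intro q _
    norm_num
  rw [hinner]
  have hr3 : ∫ r in Icc (0:ℝ) 1, r ^ 3 = 1 / 4 := by
    rw [integral_Icc_eq_integral_Ioc, ← intervalIntegral.integral_of_le zero_le_one,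
      integral_pow]
    norm_num
  have hθ1 : ∫ θ in Icc (0:ℝ) (2 * π), (1:ℝ) = 2 * π := by
    rw [setIntegral_const, smul_eq_mul, mul_one, measureReal_def, Real.volume_Icc]
    rw [ENNReal.toReal_ofReal (by linarith)]
    ring
  rw [hr3, hθ1, w_integral]
  have hπ : π ≠ 0 := Real.pi_ne_zero
  field_simp
  ring
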